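/- Let C be the Cantor set, let 𝒞 = {Cₙ : n < ω} be a countable partition of C into closed sets, and let Aₙ be a closed subset of Cₙ for each n. Then for any ε > 0 there exists a null partition of C (a countable closed partition whose elements' diameters converge to 0) of mesh < ε, which refines 𝒞 and respects 𝒜 = {Aₙ : n < ω}. -/

import Mathlib

open Set Filter Topology

/-- The Euclidean plane. -/
abbrev Plane := EuclideanSpace ℝ (Fin 2)

section Defs

variable {α : Type*} [TopologicalSpace α]

/-- `A` is an arc with endpoints `a` and `b`: a homeomorphic image of `[0,1]`
sending `0 ↦ a` and `1 ↦ b`. -/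
def IsArcWithEndpoints (A : Set α) (a b : α) : Prop :=
  ∃ f : ℝ → α, ContinuousOn f (Set.Icc 0 1) ∧ Set.InjOn f (Set.Icc 0 1) ∧
    f '' (Set.Icc 0 1) = A ∧ f 0 = a ∧ f 1 = b

/-- `A` is an arc. -/
def IsArc (A : Set α) : Prop := ∃ a b, IsArcWithEndpoints A a b

/-- Every two distinct points of `X` are joined by an arc inside `X`. -/
def ArcwiseConnected (X : Set α) : Prop :=
  ∀ x ∈ X, ∀ y ∈ X, x ≠ y → ∃ A, A ⊆ X ∧ IsArcWithEndpoints A x y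

/-- Every two subcontinua of `X` have connected intersection. -/
def HereditarilyUnicoherent (X : Set α) : Prop :=
  ∀ K L : Set α, K ⊆ X → L ⊆ X → IsCompact K → IsConnected K →
    IsCompact L → IsConnected L → IsPreconnected (K ∩ L)

/-- A dendroid: a hereditarily unicoherent, arcwise connected continuum. -/
def IsDendroid (X : Set α) : Prop :=
  IsCompact X ∧ IsConnected X ∧ HereditarilyUnicoherent X ∧ ArcwiseConnected X

/-- The set of endpoints of `X`: points that are endpoints of every arc in `X`
containing them. -/
def Endpoints (X : Set α) : Set α :=
  {e | e ∈ X ∧ ∀ A : Set α, A ⊆ X → IsArc A → e ∈ A → ∃ b, IsArcWithEndpoints A e b}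

/-- `X` is Suslinian: every collection of pairwise-disjoint non-degenerate
subcontinua of `X` is countable. -/
def IsSuslinian (X : Set α) : Prop :=
  ∀ S : Set (Set α), (∀ K ∈ S, K ⊆ X ∧ IsCompact K ∧ IsConnected K ∧ K.Nontrivial) →
    S.PairwiseDisjoint id → S.Countable

/-- The arc component of `x` inside the set `S`. -/
def arcComponentIn (S : Set α) (x : α) : Set α :=
  {y | y ∈ S ∧ (y = x ∨ ∃ A, A ⊆ S ∧ IsArcWithEndpoints A x y)}

/-- The collection of arc components of `X \ {x}`; its cardinality is the order of `x`. -/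
def orderComponents (X : Set α) (x : α) : Set (Set α) :=
  {C | ∃ y ∈ X \ {x}, C = arcComponentIn (X \ {x}) y}

/-- Ramification points of `X`: points of order at least 3. -/
def RamificationPoints (X : Set α) : Set α :=
  {x | x ∈ X ∧ 3 ≤ (orderComponents X x).encard}

/-- `A` is a clopen subset of the subspace `Y`. -/
def IsClopenIn (Y A : Set α) : Prop :=
  A ⊆ Y ∧ (∃ U, IsOpen U ∧ A = Y ∩ U) ∧ (∃ C, IsClosed C ∧ A = Y ∩ C)

/-- The quasicomponent of `x` in the subspace `Y`: the intersection of all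
clopen subsets of `Y` containing `x`. -/
def quasicomponentIn (Y : Set α) (x : α) : Set α :=
  {y ∈ Y | ∀ A : Set α, IsClopenIn Y A → x ∈ A → y ∈ A}

/-- `Y` is hereditarily disconnected: it contains no non-degenerate connected subset. -/
def HereditarilyDisconnected (Y : Set α) : Prop :=
  ∀ S : Set α, S ⊆ Y → IsPreconnected S → S.Subsingleton

end Defs

/-- The point `x` of `X` is (arcwise) accessible from `ℝ² \ X`. -/
def AccessiblePoint (X : Set Plane) (x : Plane) : Prop :=
  ∃ A : Set Plane, IsArc A ∧ A ∩ X = {x}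

/-- `σ` separates the points `b` and `d` in the plane: no connected subset of the
complement of `σ` contains both. -/
def SeparatesPoints (σ : Set Plane) (b d : Plane) : Prop :=
  b ∉ σ ∧ d ∉ σ ∧ ∀ K : Set Plane, K ⊆ σᶜ → IsPreconnected K → b ∈ K → d ∉ K

/-- A simple closed curve in the plane: the image of a period-1 parametrization
injective on `[0,1)`. -/
def IsSimpleClosedCurve (O : Set Plane) : Prop :=
  ∃ f : ℝ → Plane, Continuous f ∧ Function.Periodic f 1 ∧
    Set.InjOn f (Set.Ico 0 1) ∧ f '' (Set.Ico 0 1) = O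

/-- The dendroid `X` is smooth at `p`: there is a choice `arcTo x` of the unique arc
from `x` to `p` (reduced to `{p}` for `x = p`) such that `xₙ → x` in `X` implies
`arcTo xₙ → arcTo x` in the Hausdorff distance. -/
def DendroidSmoothAt (X : Set Plane) (p : Plane) : Prop :=
  p ∈ X ∧ ∃ arcTo : Plane → Set Plane,
    arcTo p = {p} ∧
    (∀ x ∈ X, x ≠ p → arcTo x ⊆ X ∧ IsArcWithEndpoints (arcTo x) x p) ∧
    (∀ (xs : ℕ → Plane) (x : Plane), (∀ n, xs n ∈ X) → x ∈ X →
      Filter.Tendsto xs Filter.atTop (nhds x) →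
      Filter.Tendsto (fun n => EMetric.hausdorffEdist (arcTo (xs n)) (arcTo x))
        Filter.atTop (nhds 0))

/-- A space is zero-dimensional if it has a basis of clopen sets. -/
def IsZeroDimensionalSpace (β : Type*) [TopologicalSpace β] : Prop :=
  ∀ (x : β) (U : Set β), IsOpen U → x ∈ U → ∃ V : Set β, IsClopen V ∧ x ∈ V ∧ V ⊆ U

/-- A space is almost zero-dimensional if it has a neighborhood basis of sets
which are intersections of clopen sets. -/
def IsAlmostZeroDimensionalSpace (β : Type*) [TopologicalSpace β] : Prop :=
  ∀ (x : β) (U : Set β), IsOpen U → x ∈ U →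
    ∃ V : Set β, V ∈ nhds x ∧ V ⊆ U ∧
      ∃ 𝒞 : Set (Set β), (∀ C ∈ 𝒞, IsClopen C) ∧ V = ⋂₀ 𝒞

/-- The union of `W` with all of the bounded connected components of its complement. -/
def boundedComplementaryFill (W : Set Plane) : Set Plane :=
  W ∪ ⋃₀ {K | (∃ x ∈ Wᶜ, K = connectedComponentIn Wᶜ x) ∧ Bornology.IsBounded K}

/-- A Bellamy dendroid: a (non-degenerate) smooth plane dendroid whose endpoint
set is connected. -/
def IsBellamyDendroid (K : Set Plane) : Prop :=
  IsDendroid K ∧ K.Nontrivial ∧ (∃ q, DendroidSmoothAt K q) ∧ IsConnected (Endpoints K)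

/-- The middle-thirds Cantor set. -/
noncomputable def cantorC : Set ℝ :=
  {x | ∃ a : ℕ → Bool, x = ∑' i, (if a i then (2 : ℝ) else 0) / 3 ^ (i + 1)}


noncomputable section CantorAux

/-- The `i`-th term of the ternary expansion. -/
def cTerm (a : ℕ → Bool) (i : ℕ) : ℝ := (if a i then (2:ℝ) else 0) / 3 ^ (i+1)

/-- The coding map from Cantor space to the middle-thirds Cantor set. -/
def cF (a : ℕ → Bool) : ℝ := ∑' i, cTerm a i

lemma cTerm_nonneg (a : ℕ → Bool) (i : ℕ) : 0 ≤ cTerm a i := by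
  unfold cTerm; split_ifs <;> positivity

lemma cTerm_le (a : ℕ → Bool) (i : ℕ) : cTerm a i ≤ 2 / 3 ^ (i+1) := by
  unfold cTerm; split_ifs
  · exact le_refl _
  · simp; positivity

lemma summable_bound : Summable (fun i : ℕ => (2:ℝ) / 3 ^ (i+1)) := by
  have h := (summable_geometric_of_lt_one (by norm_num : (0:ℝ) ≤ 1/3) (by norm_num)).mul_left (2/3 : ℝ)
  refine h.congr fun i => ?_
  rw [pow_succ, one_div, inv_pow]
  field_simp

lemma summable_cTerm (a : ℕ → Bool) : Summable (cTerm a) :=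
  Summable.of_nonneg_of_le (cTerm_nonneg a) (cTerm_le a) summable_bound

lemma tsum_bound_tail (k : ℕ) : ∑' i : ℕ, (2:ℝ) / 3 ^ (i+k+1) = (1/3) ^ k := by
  have h1 : ∀ i : ℕ, (2:ℝ) / 3 ^ (i+k+1) = (2 / 3 ^ (k+1)) * (1/3) ^ i := by
    intro i
    rw [show i+k+1 = i+(k+1) by ring, pow_add, one_div, inv_pow]
    field_simp
  rw [tsum_congr h1, tsum_mul_left, tsum_geometric_of_lt_one (by norm_num) (by norm_num)]
  have h3 : (3:ℝ)^k ≠ 0 := by positivity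
  have h4 : ((1:ℝ)/3)^k * 3^k = 1 := by rw [← mul_pow]; norm_num
  field_simp [pow_succ]
  linear_combination (-6 : ℝ) * h4

lemma tail_nonneg (a : ℕ → Bool) (k : ℕ) : 0 ≤ ∑' i, cTerm a (i+k) :=
  tsum_nonneg fun i => cTerm_nonneg a (i+k)

lemma tail_le (a : ℕ → Bool) (k : ℕ) : ∑' i, cTerm a (i+k) ≤ (1/3 : ℝ) ^ k := by
  calc ∑' i, cTerm a (i+k) ≤ ∑' i : ℕ, (2:ℝ) / 3 ^ (i+k+1) := by
        refine Summable.tsum_le_tsum (fun i => cTerm_le a (i+k))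
          ((summable_nat_add_iff k).2 (summable_cTerm a)) ?_
        exact (summable_nat_add_iff (f := fun i => (2:ℝ)/3^(i+1)) k).2 summable_bound
    _ = (1/3) ^ k := tsum_bound_tail k

lemma cF_split (a : ℕ → Bool) (k : ℕ) :
    cF a = (∑ i ∈ Finset.range k, cTerm a i) + ∑' i, cTerm a (i+k) :=
  ((summable_cTerm a).sum_add_tsum_nat_add k).symm

lemma dist_cF_le {a b : ℕ → Bool} {k : ℕ} (h : ∀ i < k, a i = b i) :
    dist (cF a) (cF b) ≤ (1/3 : ℝ) ^ k := by
  rw [Real.dist_eq, cF_split a k, cF_split b k]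
  have hs : ∑ i ∈ Finset.range k, cTerm a i = ∑ i ∈ Finset.range k, cTerm b i :=
    Finset.sum_congr rfl fun i hi => by unfold cTerm; rw [h i (Finset.mem_range.1 hi)]
  rw [hs, show (∑ i ∈ Finset.range k, cTerm b i) + (∑' i, cTerm a (i+k)) -
      ((∑ i ∈ Finset.range k, cTerm b i) + ∑' i, cTerm b (i+k))
      = (∑' i, cTerm a (i+k)) - ∑' i, cTerm b (i+k) by ring]
  have h1 := tail_nonneg a k
  have h2 := tail_le a k
  have h3 := tail_nonneg b k
  have h4 := tail_le b k
  rw [abs_le]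
  constructor <;> linarith

lemma cF_lt {a b : ℕ → Bool} {i : ℕ} (h : ∀ j < i, a j = b j)
    (ha : a i = false) (hb : b i = true) : cF a < cF b := by
  rw [cF_split a (i+1), cF_split b (i+1), Finset.sum_range_succ, Finset.sum_range_succ]
  have hP : ∑ j ∈ Finset.range i, cTerm a j = ∑ j ∈ Finset.range i, cTerm b j :=
    Finset.sum_congr rfl fun j hj => by unfold cTerm; rw [h j (Finset.mem_range.1 hj)]
  have hta : cTerm a i = 0 := by unfold cTerm; rw [ha]; norm_num
  have htb : cTerm b i = 2 / 3 ^ (i+1) := by unfold cTerm; rw [hb]; norm_num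
  have h1 := tail_le a (i+1)
  have h2 := tail_nonneg b (i+1)
  have key : ((1:ℝ)/3) ^ (i+1) < 2 / 3 ^ (i+1) := by
    rw [one_div, inv_pow, ← one_div]
    have h3 : (0:ℝ) < 3 ^ (i+1) := by positivity
    rw [div_lt_div_iff₀ h3 h3]
    nlinarith
  rw [hP, hta, htb]
  linarith

lemma cF_ne {a b : ℕ → Bool} {i : ℕ} (h : ∀ j < i, a j = b j) (hne : a i ≠ b i) :
    cF a ≠ cF b := by
  cases ha : a i <;> cases hb : b i
  · exact absurd (ha.trans hb.symm) hne
  · exact ne_of_lt (cF_lt h ha hb)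
  · exact (ne_of_lt (cF_lt (fun j hj => (h j hj).symm) hb ha)).symm
  · exact absurd (ha.trans hb.symm) hne

/-- The set of sequences with a given finite prefix. -/
def cPre (s : List Bool) : Set (ℕ → Bool) := {a | ∀ i (h : i < s.length), a i = s[i]}

/-- A basic cell of the Cantor set, determined by a finite prefix. -/
def cCell (s : List Bool) : Set ℝ := cF '' cPre s

lemma continuous_cF : Continuous cF := by
  refine continuous_tsum (fun i => ?_) summable_bound (fun i a => ?_)
  · exact (continuous_of_discreteTopology :
      Continuous fun b : Bool => (if b then (2:ℝ) else 0) / 3 ^ (i+1)).comp (continuous_apply i)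
  · rw [Real.norm_eq_abs, abs_of_nonneg (cTerm_nonneg a i)]
    exact cTerm_le a i

lemma isClosed_cPre (s : List Bool) : IsClosed (cPre s) := by
  have : cPre s = ⋂ i : Fin s.length, (fun a : ℕ → Bool => a i) ⁻¹' {s.get i} := by
    ext a
    simp only [cPre, mem_setOf_eq, mem_iInter, mem_preimage, mem_singleton_iff]
    constructor
    · intro h i; rw [List.get_eq_getElem]; exact h i i.2
    · intro h i hi; exact (h ⟨i, hi⟩).trans List.get_eq_getElem
  rw [this]
  exact isClosed_iInter fun i => (isClosed_singleton).preimage (continuous_apply _)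

lemma isCompact_cCell (s : List Bool) : IsCompact (cCell s) :=
  ((isClosed_cPre s).isCompact).image continuous_cF

lemma isClosed_cCell (s : List Bool) : IsClosed (cCell s) := (isCompact_cCell s).isClosed

lemma isBounded_cCell (s : List Bool) : Bornology.IsBounded (cCell s) :=
  (isCompact_cCell s).isBounded

lemma diam_cCell_le (s : List Bool) : Metric.diam (cCell s) ≤ (1/3 : ℝ) ^ s.length := by
  refine Metric.diam_le_of_forall_dist_le (by positivity) ?_
  rintro x ⟨a, ha, rfl⟩ y ⟨b, hb, rfl⟩
  exact dist_cF_le fun i hi => (ha i hi).trans (hb i hi).symm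

lemma cCell_mono {s t : List Bool} (hlen : s.length ≤ t.length)
    (h : ∀ i (hi : i < s.length), t[i]'(lt_of_lt_of_le hi hlen) = s[i]) :
    cCell t ⊆ cCell s := by
  rintro x ⟨a, ha, rfl⟩
  exact ⟨a, fun i hi => (ha i (lt_of_lt_of_le hi hlen)).trans (h i hi), rfl⟩

lemma cCell_disjoint {s t : List Bool} {i : ℕ} (hi : i < s.length) (hi' : i < t.length)
    (hne : s[i] ≠ t[i]) : Disjoint (cCell s) (cCell t) := by
  have hex : ∃ n, n < s.length ∧ n < t.length ∧ s.getD n false ≠ t.getD n false :=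
    ⟨i, hi, hi', by rwa [List.getD_eq_getElem _ _ hi, List.getD_eq_getElem _ _ hi']⟩
  obtain ⟨hj1, hj2, hj3⟩ := Nat.find_spec hex
  rw [Set.disjoint_left]
  rintro x ⟨a, ha, rfl⟩ ⟨b, hb, hEq⟩
  refine cF_ne (i := Nat.find hex) (fun k hk => ?_) ?_ hEq.symm
  · have hmin := Nat.find_min hex hk
    push_neg at hmin
    have h1 : k < s.length := lt_of_lt_of_le hk (Nat.le_of_lt_succ (Nat.lt_succ_of_lt hj1)) |>.trans_le (le_refl _)
    have h1 : k < s.length := hk.trans hj1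
    have h2 : k < t.length := hk.trans hj2
    have := hmin h1 h2
    rw [List.getD_eq_getElem _ _ h1, List.getD_eq_getElem _ _ h2] at this
    rw [ha k h1, hb k h2, this]
  · rw [ha _ hj1, hb _ hj2]
    rwa [List.getD_eq_getElem _ _ hj1, List.getD_eq_getElem _ _ hj2] at hj3

/-- The length-`k` prefix of a sequence. -/
def pfx (a : ℕ → Bool) (k : ℕ) : List Bool := List.ofFn fun i : Fin k => a i

lemma length_pfx (a : ℕ → Bool) (k : ℕ) : (pfx a k).length = k := by
  simp [pfx]

lemma getElem_pfx (a : ℕ → Bool) (k i : ℕ) (h : i < (pfx a k).length) :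
    (pfx a k)[i] = a i := by
  simp [pfx]

lemma mem_cCell_pfx (a : ℕ → Bool) (k : ℕ) : cF a ∈ cCell (pfx a k) :=
  ⟨a, fun i hi => (getElem_pfx a k i hi).symm, rfl⟩

lemma dropLast_pfx (a : ℕ → Bool) (k : ℕ) : (pfx a (k+1)).dropLast = pfx a k := by
  refine List.ext_getElem (by simp [pfx]) fun n h1 h2 => ?_
  rw [List.getElem_dropLast, getElem_pfx, getElem_pfx]

lemma cantorC_eq : cantorC = Set.range cF := by
  ext x
  simp only [cantorC, Set.mem_setOf_eq, Set.mem_range, cF, cTerm, eq_comm]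

end CantorAux

/-- Lemma 19: refining null partitions of the Cantor set. -/
theorem stmt_18 (𝒞 : ℕ → Set ℝ)
    (h𝒞cl : ∀ n, IsClosed (𝒞 n)) (h𝒞sub : ∀ n, 𝒞 n ⊆ cantorC)
    (h𝒞union : ⋃ n, 𝒞 n = cantorC)
    (h𝒞disj : Pairwise (Function.onFun Disjoint 𝒞))
    (A : ℕ → Set ℝ) (hAcl : ∀ n, IsClosed (A n)) (hAsub : ∀ n, A n ⊆ 𝒞 n)
    (ε : ℝ) (hε : 0 < ε) :
    ∃ 𝒟 : ℕ → Set ℝ, (∀ n, IsClosed (𝒟 n)) ∧ (⋃ n, 𝒟 n = cantorC) ∧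
      Pairwise (Function.onFun Disjoint 𝒟) ∧
      (∀ n, Metric.diam (𝒟 n) < ε) ∧
      Filter.Tendsto (fun n => Metric.diam (𝒟 n)) Filter.atTop (nhds 0) ∧
      (∀ n, ∃ m, 𝒟 n ⊆ 𝒞 m) ∧
      (∀ n m, 𝒟 n ⊆ A m ∨ Disjoint (𝒟 n) (A m)) := by
  classical
  have hKex : ∀ m : ℕ, ∃ k : ℕ, ((1:ℝ)/3) ^ k < min ε (1/(m+1)) := fun m =>
    exists_pow_lt_of_lt_one (lt_min hε (by positivity)) (by norm_num)
  choose K hK using hKex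
  obtain ⟨piece, hpdef⟩ : ∃ p : ℕ → List Bool → Set ℝ, ∀ m s, p m s =
      (if s.length < K m then ∅
      else if (cCell s ∩ A m).Nonempty then
        (if s.length = K m then A m ∩ cCell s else ∅)
      else if s.length = K m ∨ (cCell s.dropLast ∩ A m).Nonempty then cCell s ∩ 𝒞 m
      else ∅) :=
    ⟨_, fun _ _ => rfl⟩
  -- classification of the pieces
  have hclass : ∀ m s, piece m s = ∅ ∨
      (piece m s = A m ∩ cCell s ∧ s.length = K m ∧ (cCell s ∩ A m).Nonempty) ∨
      (piece m s = cCell s ∩ 𝒞 m ∧ K m ≤ s.length ∧ ¬(cCell s ∩ A m).Nonempty ∧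
        (s.length = K m ∨ (cCell s.dropLast ∩ A m).Nonempty)) := by
    intro m s
    rw [hpdef]
    split_ifs with h1 h2 h3 h4
    · exact Or.inl rfl
    · exact Or.inr (Or.inl ⟨rfl, h3, h2⟩)
    · exact Or.inl rfl
    · exact Or.inr (Or.inr ⟨rfl, not_lt.1 h1, h2, h4⟩)
    · exact Or.inl rfl
  -- basic properties of `piece`
  have hsubC : ∀ m s, piece m s ⊆ 𝒞 m := by
    intro m s
    rcases hclass m s with h | ⟨h, -⟩ | ⟨h, -⟩ <;> rw [h]
    · exact empty_subset _
    · exact inter_subset_left.trans (hAsub m)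
    · exact inter_subset_right
  have hsubcell : ∀ m s, piece m s ⊆ cCell s := by
    intro m s
    rcases hclass m s with h | ⟨h, -⟩ | ⟨h, -⟩ <;> rw [h]
    · exact empty_subset _
    · exact inter_subset_right
    · exact inter_subset_left
  have hclosed : ∀ m s, IsClosed (piece m s) := by
    intro m s
    rcases hclass m s with h | ⟨h, -⟩ | ⟨h, -⟩ <;> rw [h]
    · exact isClosed_empty
    · exact (hAcl m).inter (isClosed_cCell s)
    · exact (isClosed_cCell s).inter (h𝒞cl m)
  have hdiamL : ∀ m s, Metric.diam (piece m s) ≤ ((1:ℝ)/3) ^ s.length := fun m s =>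
    (Metric.diam_mono (hsubcell m s) (isBounded_cCell s)).trans (diam_cCell_le s)
  have hdiamK : ∀ m s, Metric.diam (piece m s) ≤ ((1:ℝ)/3) ^ (K m) := by
    intro m s
    rcases hclass m s with h | ⟨-, hlen, -⟩ | ⟨-, hlen, -⟩
    · rw [h, Metric.diam_empty]; positivity
    · exact (hdiamL m s).trans (pow_le_pow_of_le_one (by norm_num) (by norm_num) hlen.ge)
    · exact (hdiamL m s).trans (pow_le_pow_of_le_one (by norm_num) (by norm_num) hlen)
  -- respecting the A's
  have hresp : ∀ m s m', piece m s ⊆ A m' ∨ Disjoint (piece m s) (A m') := by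
    intro m s m'
    by_cases hmm : m = m'
    · subst hmm
      rcases hclass m s with h | ⟨h, -⟩ | ⟨h, -, hA, -⟩ <;> rw [h]
      · exact Or.inr disjoint_bot_left
      · exact Or.inl inter_subset_left
      · refine Or.inr (Disjoint.mono_left inter_subset_left ?_)
        rw [Set.disjoint_iff_inter_eq_empty]
        exact Set.not_nonempty_iff_eq_empty.1 hA
    · exact Or.inr ((h𝒞disj hmm).mono (hsubC m s) (hAsub m'))
  -- disjointness of two "maximal avoiding" cells
  have hMdis : ∀ (m : ℕ) (s s' : List Bool), s.length ≤ s'.length → s ≠ s' →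
      ¬(cCell s ∩ A m).Nonempty → K m ≤ s.length →
      (s'.length = K m ∨ (cCell s'.dropLast ∩ A m).Nonempty) →
      Disjoint (cCell s) (cCell s') := by
    intro m s s' hle hne hA hK1 hcond'
    by_cases hdiff : ∃ i, ∃ h : i < s.length, s[i] ≠ s'[i]'(lt_of_lt_of_le h hle)
    · obtain ⟨i, hi, hd⟩ := hdiff
      exact cCell_disjoint hi (lt_of_lt_of_le hi hle) hd
    · push_neg at hdiff
      exfalso
      rcases eq_or_lt_of_le hle with heq | hlt
      · exact hne (List.ext_getElem heq fun n h1 h2 => hdiff n h1)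
      · have hKne : s'.length ≠ K m := by omega
        have hcc := hcond'.resolve_left hKne
        have hsub : cCell s'.dropLast ⊆ cCell s := by
          refine cCell_mono ?_ ?_
          · rw [List.length_dropLast]; omega
          · intro i hi
            rw [List.getElem_dropLast]
            exact (hdiff i hi).symm
        exact hA (hcc.mono (inter_subset_inter_left _ hsub))
  -- full pairwise disjointness
  have hdisj : ∀ m s m' s', (m, s) ≠ (m', s') → Disjoint (piece m s) (piece m' s') := by
    intro m s m' s' hne
    by_cases hm : m = m'
    · subst hm
      have hs : s ≠ s' := fun h => hne (by rw [h])
      have cellcell : ∀ t t' : List Bool, t.length = t'.length → t ≠ t' →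
          Disjoint (cCell t) (cCell t') := by
        intro t t' hlen hne'
        have : ∃ i, ∃ h : i < t.length, t[i] ≠ t'[i]'(hlen ▸ h) := by
          by_contra hno
          push_neg at hno
          exact hne' (List.ext_getElem hlen fun n h1 h2 => hno n h1)
        obtain ⟨i, hi, hd⟩ := this
        exact cCell_disjoint hi (hlen ▸ hi) hd
      rcases hclass m s with h | ⟨h, hlen, hA⟩ | ⟨h, hlen, hA, hcond⟩ <;> rw [h]
      · exact disjoint_bot_left
      · rcases hclass m s' with h' | ⟨h', hlen', hA'⟩ | ⟨h', hlen', hA', hcond'⟩ <;> rw [h']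
        · exact disjoint_bot_right
        · exact (cellcell s s' (hlen.trans hlen'.symm) hs).mono inter_subset_right
            inter_subset_right
        · refine Disjoint.mono inter_subset_left inter_subset_left ?_
          rw [disjoint_comm, Set.disjoint_iff_inter_eq_empty]
          exact Set.not_nonempty_iff_eq_empty.1 hA'
      · rcases hclass m s' with h' | ⟨h', hlen', hA'⟩ | ⟨h', hlen', hA', hcond'⟩ <;> rw [h']
        · exact disjoint_bot_right
        · refine Disjoint.mono inter_subset_left inter_subset_left ?_
          rw [Set.disjoint_iff_inter_eq_empty]
          exact Set.not_nonempty_iff_eq_empty.1 hA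
        · refine Disjoint.mono inter_subset_left inter_subset_left ?_
          rcases le_total s.length s'.length with hle | hle
          · exact hMdis m s s' hle hs hA hlen hcond'
          · exact (hMdis m s' s hle (Ne.symm hs) hA' hlen' hcond).symm
    · exact (h𝒞disj hm).mono (hsubC m s) (hsubC m' s')
  -- coverage
  have hcover : ∀ x ∈ cantorC, ∃ m s, x ∈ piece m s := by
    intro x hx
    obtain ⟨m, hxm⟩ : ∃ m, x ∈ 𝒞 m := by rw [← h𝒞union] at hx; exact mem_iUnion.1 hx
    rw [cantorC_eq] at hx
    obtain ⟨a, rfl⟩ := hx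
    by_cases hxA : cF a ∈ A m
    · refine ⟨m, pfx a (K m), ?_⟩
      rw [hpdef]
      rw [if_neg (by rw [length_pfx]; exact lt_irrefl _),
        if_pos ⟨cF a, mem_cCell_pfx a _, hxA⟩, if_pos (length_pfx a _)]
      exact ⟨hxA, mem_cCell_pfx a _⟩
    · obtain ⟨δ, hδ, hball⟩ := Metric.isOpen_iff.1 (hAcl m).isOpen_compl (cF a) hxA
      obtain ⟨k0, hk0⟩ := exists_pow_lt_of_lt_one hδ (show (1:ℝ)/3 < 1 by norm_num)
      have hP : ∃ j, K m ≤ j ∧ cCell (pfx a j) ∩ A m = ∅ := by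
        refine ⟨max (K m) k0, le_max_left _ _, ?_⟩
        rw [Set.eq_empty_iff_forall_notMem]
        rintro y ⟨hy1, hy2⟩
        have hdist : dist y (cF a) ≤ ((1:ℝ)/3) ^ (max (K m) k0) :=
          (Metric.dist_le_diam_of_mem (isBounded_cCell _) hy1 (mem_cCell_pfx a _)).trans
            (by rw [show ((1:ℝ)/3) ^ (max (K m) k0) = ((1:ℝ)/3) ^ (pfx a (max (K m) k0)).length
                  by rw [length_pfx]]
                exact diam_cCell_le _)
        have hlt : dist y (cF a) < δ :=
          lt_of_le_of_lt (hdist.trans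
            (pow_le_pow_of_le_one (by norm_num) (by norm_num) (le_max_right _ _))) hk0
        exact hball (Metric.mem_ball.2 hlt) hy2
      obtain ⟨hjK, hjempty⟩ := Nat.find_spec hP
      refine ⟨m, pfx a (Nat.find hP), ?_⟩
      rw [hpdef]
      rw [if_neg (by rw [length_pfx]; omega),
        if_neg (by rw [Set.not_nonempty_iff_eq_empty]; exact hjempty), if_pos ?_]
      · exact ⟨mem_cCell_pfx a _, hxm⟩
      · rcases eq_or_lt_of_le hjK with hh | hh
        · exact Or.inl ((length_pfx a _).trans hh.symm)
        · right
          have hj1 := Nat.find_min hP (show Nat.find hP - 1 < Nat.find hP by omega)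
          have hnonemp : (cCell (pfx a (Nat.find hP - 1)) ∩ A m).Nonempty := by
            rw [Set.nonempty_iff_ne_empty]
            intro hc
            exact hj1 ⟨by omega, hc⟩
          have hdl : (pfx a (Nat.find hP)).dropLast = pfx a (Nat.find hP - 1) := by
            conv_lhs => rw [show Nat.find hP = (Nat.find hP - 1) + 1 by omega]
            exact dropLast_pfx a _
          rw [hdl]
          exact hnonemp
  -- assemble via an enumeration of ℕ × List Bool
  haveI : Denumerable (ℕ × List Bool) := Denumerable.ofEncodableOfInfinite _
  set e := Denumerable.eqv (ℕ × List Bool) with he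
  refine ⟨fun n => piece (e.symm n).1 (e.symm n).2, fun n => hclosed _ _, ?_, ?_, ?_, ?_,
    fun n => ⟨(e.symm n).1, hsubC _ _⟩, fun n m => hresp _ _ m⟩
  · -- union
    apply subset_antisymm
    · exact iUnion_subset fun n => (hsubC _ _).trans (h𝒞sub _)
    · intro x hx
      obtain ⟨m, s, hms⟩ := hcover x hx
      refine mem_iUnion.2 ⟨e (m, s), ?_⟩
      simpa using hms
  · -- pairwise disjoint
    intro n n' hnn
    exact hdisj _ _ _ _ fun hc => hnn (by simpa using hc)
  · -- small diameter
    intro n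
    exact lt_of_le_of_lt (hdiamK _ _) (lt_of_lt_of_le (hK _) (min_le_left _ _))
  · -- diameters tend to zero
    rw [Metric.tendsto_atTop]
    intro δ hδ
    obtain ⟨M₀, hM₀⟩ := exists_nat_gt (1/δ)
    obtain ⟨L₀, hL₀⟩ := exists_pow_lt_of_lt_one hδ (show (1:ℝ)/3 < 1 by norm_num)
    have hSfin : {p : ℕ × List Bool | δ ≤ Metric.diam (piece p.1 p.2)}.Finite := by
      refine Set.Finite.subset ((Set.finite_Iio M₀).prod (List.finite_length_le Bool L₀)) ?_
      rintro ⟨m, s⟩ hp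
      simp only [Set.mem_setOf_eq] at hp
      constructor
      · have h1 : δ ≤ ((1:ℝ)/3) ^ (K m) := hp.trans (hdiamK m s)
        have h2 : δ < 1/(m+1) := lt_of_le_of_lt h1 (lt_of_lt_of_le (hK m) (min_le_right _ _))
        have h3 : ((m:ℝ)+1) < 1/δ := by
          rw [lt_div_iff₀ hδ]
          have h2' := (lt_div_iff₀ (show (0:ℝ) < (m:ℝ)+1 by positivity)).1 h2
          linarith
        have h4 : ((m:ℝ)+1) < M₀ := h3.trans hM₀
        have h5 : (m:ℝ) < M₀ := by linarith
        exact_mod_cast h5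
      · simp only [Set.mem_setOf_eq]
        by_contra hlen
        push_neg at hlen
        have : ((1:ℝ)/3) ^ s.length ≤ ((1:ℝ)/3) ^ L₀ :=
          pow_le_pow_of_le_one (by norm_num) (by norm_num) hlen.le
        have := hp.trans ((hdiamL m s).trans this)
        linarith
    have hfin : {n : ℕ | δ ≤ Metric.diam (piece (e.symm n).1 (e.symm n).2)}.Finite := by
      have : {n : ℕ | δ ≤ Metric.diam (piece (e.symm n).1 (e.symm n).2)} =
          e.symm ⁻¹' {p : ℕ × List Bool | δ ≤ Metric.diam (piece p.1 p.2)} := rfl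
      rw [this]
      exact Set.Finite.preimage (e.symm.injective.injOn) hSfin
    rcases hfin.bddAbove with ⟨N, hN⟩
    refine ⟨N + 1, fun n hn => ?_⟩
    have hnot : ¬ δ ≤ Metric.diam (piece (e.symm n).1 (e.symm n).2) := by
      intro hcon
      exact absurd (hN hcon) (by omega)
    show dist (Metric.diam (piece (e.symm n).1 (e.symm n).2)) 0 < δ
    rw [Real.dist_eq, sub_zero, abs_of_nonneg Metric.diam_nonneg]
    linarith [not_le.1 hnot]
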